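/- Let F be a field, let A(x) be a polynomial over F with natDegree at most n, let k ≥ 1 be an integer, and let γ ∈ F. Then for every integer j with n+1−k ≤ j ≤ k−1, the coefficient of x^j in the remainder of A(x) upon division by the monic polynomial x^k − γ equals the coefficient of x^j in A(x). -/

import Mathlib

open Polynomial

/-- Modulo technique (Lemma 1 / Remark 1): reducing a polynomial `A` of degree at most `n`
modulo the monic polynomial `x^k - γ` leaves the coefficients of `x^j` with
`n + 1 - k ≤ j ≤ k - 1` unchanged. -/
theorem stmt_0 {F : Type*} [Field F] (n k : ℕ) (hk : 1 ≤ k) (γ : F)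
    (A : F[X]) (hA : A.natDegree ≤ n)
    (j : ℕ) (hj₁ : n + 1 ≤ j + k) (hj₂ : j ≤ k - 1) :
    (A %ₘ (X ^ k - C γ)).coeff j = A.coeff j := by
  have hM : (X ^ k - C γ : F[X]).Monic := monic_X_pow_sub_C γ (by omega)
  have hQ : (A /ₘ (X ^ k - C γ)).coeff j = 0 := by
    by_cases hc : A.natDegree < k
    · rw [divByMonic_eq_zero_iff hM |>.mpr, coeff_zero]
      calc A.degree ≤ A.natDegree := degree_le_natDegree
        _ < (X ^ k - C γ : F[X]).natDegree := by
            rw [natDegree_X_pow_sub_C]; exact_mod_cast hc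
        _ ≤ (X ^ k - C γ : F[X]).degree := degree_eq_natDegree hM.ne_zero ▸ le_rfl
    · apply coeff_eq_zero_of_natDegree_lt
      rw [natDegree_divByMonic A hM, natDegree_X_pow_sub_C]
      omega
  rw [modByMonic_eq_sub_mul_div A (X ^ k - C γ), coeff_sub, sub_mul, coeff_sub,
    coeff_X_pow_mul', if_neg (by omega), coeff_C_mul, hQ, mul_zero]
  ring
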